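/- A point x₀ ∈ E is a critical point of J (i.e., J'(x₀) = 0) if and only if x₀ solves the discrete boundary value problem Δⁿ(p(k-n)Δⁿx(k-n)) + (-1)^{n+1} f(k, x(k)) = 0 for all k ∈ Z[1,N], with x(i) = 0 for i ∈ Z[1-n,0] ∪ Z[N+1,N+n]. -/

import Mathlib

open Finset

/-- forward difference operator -/
def dd (x : ℤ → ℝ) : ℤ → ℝ := fun i => x (i + 1) - x i

/-- extension of `v : Fin N → ℝ` to a function on `ℤ` supported on `Z[1,N]`
(thus vanishing on `Z[1-n,0] ∪ Z[N+1,N+n]`); this realizes the space `E`. -/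
noncomputable def extendE (N : ℕ) (v : Fin N → ℝ) : ℤ → ℝ := fun i =>
  if h : 0 ≤ i - 1 ∧ (i - 1).toNat < N then v ⟨(i - 1).toNat, h.2⟩ else 0

/-- the norm of the space `E`: `‖x‖ = (∑_{k=1}^N x(k)²)^{1/2}` -/
noncomputable def normE (N : ℕ) (v : Fin N → ℝ) : ℝ :=
  Real.sqrt (∑ k ∈ Finset.Icc (1 : ℤ) (N : ℤ), (extendE N v k) ^ 2)

/-- `F(k,s) = ∫₀ˢ f(k,t) dt` -/
noncomputable def Ffun (f : ℤ → ℝ → ℝ) (k : ℤ) (s : ℝ) : ℝ := ∫ t in (0 : ℝ)..s, f k t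

/-- the action functional `J` -/
noncomputable def Jfun (n N : ℕ) (p : ℤ → ℝ) (F : ℤ → ℝ → ℝ) (v : Fin N → ℝ) : ℝ :=
  ∑ k ∈ Finset.Icc (1 - (n : ℤ)) (N : ℤ),
    ((1 / 2 : ℝ) * p k * (dd^[n] (extendE N v) k) ^ 2 - F k (extendE N v k))

/-- `v` solves the discrete BVP
`Δⁿ(p(k-n)Δⁿx(k-n)) + (-1)^{n+1} f(k,x(k)) = 0`, `k ∈ Z[1,N]`,
with the Dirichlet boundary conditions built into `extendE`. -/
def Solves (n N : ℕ) (p : ℤ → ℝ) (f : ℤ → ℝ → ℝ) (v : Fin N → ℝ) : Prop :=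
  ∀ k ∈ Finset.Icc (1 : ℤ) (N : ℤ),
    dd^[n] (fun j => p j * dd^[n] (extendE N v) j) (k - n)
      + (-1 : ℝ) ^ (n + 1) * f k (extendE N v k) = 0

/-- coercivity: `J(x) → +∞` as `‖x‖ → ∞` -/
def CoerciveE (N : ℕ) (J : (Fin N → ℝ) → ℝ) : Prop :=
  ∀ C : ℝ, ∃ R : ℝ, ∀ v : Fin N → ℝ, R ≤ normE N v → C ≤ J v

/-- anti-coercivity: `J(x) → −∞` as `‖x‖ → ∞` -/
def AntiCoerciveE (N : ℕ) (J : (Fin N → ℝ) → ℝ) : Prop :=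
  ∀ C : ℝ, ∃ R : ℝ, ∀ v : Fin N → ℝ, R ≤ normE N v → J v ≤ C

lemma dd_add (x y : ℤ → ℝ) : dd (fun i => x i + y i) = fun i => dd x i + dd y i := by
  funext i; simp [dd]; ring

lemma dd_smul (c : ℝ) (x : ℤ → ℝ) : dd (fun i => c * x i) = fun i => c * dd x i := by
  funext i; simp [dd]; ring

lemma dd_iter_add (n : ℕ) (x y : ℤ → ℝ) :
    dd^[n] (fun i => x i + y i) = fun i => dd^[n] x i + dd^[n] y i := by
  induction n generalizing x y with
  | zero => simp
  | succ n ih =>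
    rw [Function.iterate_succ_apply, Function.iterate_succ_apply, Function.iterate_succ_apply,
      dd_add, ih]

lemma dd_iter_smul (n : ℕ) (c : ℝ) (x : ℤ → ℝ) :
    dd^[n] (fun i => c * x i) = fun i => c * dd^[n] x i := by
  induction n generalizing x with
  | zero => simp
  | succ n ih =>
    rw [Function.iterate_succ_apply, Function.iterate_succ_apply, dd_smul, ih]

lemma extendE_add (N : ℕ) (v w : Fin N → ℝ) :
    extendE N (v + w) = fun k => extendE N v k + extendE N w k := by
  funext k; unfold extendE; split <;> simp

lemma extendE_smul (N : ℕ) (c : ℝ) (v : Fin N → ℝ) :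
    extendE N (c • v) = fun k => c * extendE N v k := by
  funext k; unfold extendE; split <;> simp

lemma extendE_support (N : ℕ) (v : Fin N → ℝ) (k : ℤ) (h : k < 1 ∨ (N:ℤ) < k) :
    extendE N v k = 0 := by
  unfold extendE; rw [dif_neg]; rintro ⟨h1, h2⟩; omega

lemma extendE_single (N : ℕ) (i : Fin N) (k : ℤ) :
    extendE N (Pi.single i (1:ℝ)) k = if k = (i:ℤ) + 1 then 1 else 0 := by
  unfold extendE
  by_cases h : 0 ≤ k - 1 ∧ (k-1).toNat < N
  · rw [dif_pos h, Pi.single_apply]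
    by_cases hk : k = (i:ℤ)+1
    · have : (⟨(k-1).toNat, h.2⟩ : Fin N) = i := by ext; simp; omega
      rw [if_pos this, if_pos hk]
    · have : (⟨(k-1).toNat, h.2⟩ : Fin N) ≠ i := by
        intro hc
        have := congrArg Fin.val hc
        simp at this; omega
      rw [if_neg this, if_neg hk]
  · rw [dif_neg h]
    have hk : k ≠ (i:ℤ)+1 := by
      intro hc; apply h
      have := i.isLt
      constructor <;> omega
    simp [hk]

lemma sbp_one (g e : ℤ → ℝ) (a b : ℤ) (hab : a ≤ b + 1)
    (he : ∀ k, k < a ∨ b < k → e k = 0) :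
    ∑ k ∈ Icc (a-1) b, g k * dd e k = -∑ k ∈ Icc a b, dd g (k-1) * e k := by
  have h1 : ∑ k ∈ Icc (a-1) b, g k * dd e k
      = ∑ k ∈ Icc (a-1) b, g k * e (k+1) - ∑ k ∈ Icc (a-1) b, g k * e k := by
    rw [← Finset.sum_sub_distrib]
    refine Finset.sum_congr rfl fun k _ => by simp [dd]; ring
  have h2 : ∑ k ∈ Icc (a-1) b, g k * e (k+1) = ∑ k ∈ Icc a (b+1), g (k-1) * e k := by
    refine Finset.sum_nbij' (fun k => k + 1) (fun k => k - 1) ?_ ?_ ?_ ?_ ?_ <;>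
      intros <;> simp_all [Finset.mem_Icc] <;> omega
  have h3 : ∑ k ∈ Icc a (b+1), g (k-1) * e k = ∑ k ∈ Icc a b, g (k-1) * e k := by
    have hset : Icc a (b+1) = insert (b+1) (Icc a b) := by
      ext; simp [Finset.mem_Icc, Finset.mem_insert]; omega
    rw [hset, Finset.sum_insert (by simp [Finset.mem_Icc]),
      he (b+1) (Or.inr (by omega)), mul_zero, zero_add]
  have h4 : ∑ k ∈ Icc (a-1) b, g k * e k = ∑ k ∈ Icc a b, g k * e k := by
    have hset : Icc (a-1) b = insert (a-1) (Icc a b) := by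
      ext; simp [Finset.mem_Icc, Finset.mem_insert]; omega
    by_cases hle : a - 1 ≤ b
    · rw [hset, Finset.sum_insert (by simp [Finset.mem_Icc]),
        he (a-1) (Or.inl (by omega)), mul_zero, zero_add]
    · have h5 : Icc (a-1) b = ∅ := by
        apply Finset.Icc_eq_empty; omega
      have h6 : Icc a b = ∅ := by
        apply Finset.Icc_eq_empty; omega
      rw [h5, h6]
  rw [h1, h2, h3, h4, ← Finset.sum_sub_distrib, ← Finset.sum_neg_distrib]
  refine Finset.sum_congr rfl fun k hk => by simp [dd]; ring

lemma sbp (n : ℕ) (g e : ℤ → ℝ) (a b : ℤ) (hab : a ≤ b + 1)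
    (he : ∀ k, k < a ∨ b < k → e k = 0) :
    ∑ k ∈ Icc (a - n) b, g k * dd^[n] e k
      = (-1:ℝ)^n * ∑ k ∈ Icc a b, dd^[n] g (k - n) * e k := by
  induction n generalizing g e a with
  | zero => simp
  | succ n ih =>
    have he' : ∀ k, k < a - 1 ∨ b < k → dd e k = 0 := by
      intro k hk
      have h1 : e (k+1) = 0 := he (k+1) (by omega)
      have h2 : e k = 0 := he k (by omega)
      simp [dd, h1, h2]
    have step1 : ∑ k ∈ Icc (a - (n+1:ℕ)) b, g k * dd^[n+1] e k
        = ∑ k ∈ Icc ((a-1) - n) b, g k * dd^[n] (dd e) k := by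
      have harg : a - ((n:ℤ)+1) = (a-1) - n := by ring
      push_cast
      rw [harg]
      refine Finset.sum_congr rfl fun k _ => by rw [Function.iterate_succ_apply]
    rw [step1, ih g (dd e) (a-1) (by omega) he']
    have step2 : ∑ k ∈ Icc (a-1) b, dd^[n] g (k - n) * dd e k
        = -∑ k ∈ Icc a b, dd (fun j => dd^[n] g (j - n)) (k-1) * e k := by
      exact sbp_one (fun j => dd^[n] g (j - n)) e a b hab he
    rw [step2]
    have step3 : ∀ k : ℤ, dd (fun j => dd^[n] g (j - n)) (k-1) = dd^[n+1] g (k - (n+1:ℕ)) := by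
      intro k
      rw [Function.iterate_succ_apply']
      simp [dd]
      congr 2 <;> push_cast <;> ring
    rw [show ∑ k ∈ Icc a b, dd (fun j => dd^[n] g (j - n)) (k-1) * e k
        = ∑ k ∈ Icc a b, dd^[n+1] g (k - (n+1:ℕ)) * e k from
      Finset.sum_congr rfl fun k _ => by rw [step3]]
    push_cast
    ring

noncomputable def phiL (n N : ℕ) (k : ℤ) : (Fin N → ℝ) →L[ℝ] ℝ :=
  LinearMap.toContinuousLinearMap
    { toFun := fun v => dd^[n] (extendE N v) k
      map_add' := fun v w => by
        show dd^[n] (extendE N (v + w)) k = dd^[n] (extendE N v) k + dd^[n] (extendE N w) k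
        rw [extendE_add, dd_iter_add]
      map_smul' := fun c v => by
        show dd^[n] (extendE N (c • v)) k = (RingHom.id ℝ) c • dd^[n] (extendE N v) k
        rw [extendE_smul, dd_iter_smul]
        simp }

@[simp] lemma phiL_apply (n N : ℕ) (k : ℤ) (v : Fin N → ℝ) :
    phiL n N k v = dd^[n] (extendE N v) k := rfl

lemma hasFDeriv_term (n N : ℕ) (p : ℤ → ℝ) (f : ℤ → ℝ → ℝ) (hf : ∀ k, Continuous (f k))
    (v : Fin N → ℝ) (k : ℤ) :
    HasFDerivAt
      (fun w => (1 / 2 : ℝ) * p k * (dd^[n] (extendE N w) k) ^ 2 - Ffun f k (extendE N w k))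
      ((p k * dd^[n] (extendE N v) k) • phiL n N k - f k (extendE N v k) • phiL 0 N k) v := by
  have hp : HasFDerivAt (fun w => phiL n N k w) (phiL n N k) v := (phiL n N k).hasFDerivAt
  have h1 : HasFDerivAt (fun w => (1 / 2 : ℝ) * p k * (dd^[n] (extendE N w) k) ^ 2)
      ((p k * dd^[n] (extendE N v) k) • phiL n N k) v := by
    have := (hp.fun_mul hp).const_mul ((1/2:ℝ) * p k)
    have heq : (fun w => (1/2:ℝ) * p k * (phiL n N k w * phiL n N k w))
        = fun w => (1 / 2 : ℝ) * p k * (dd^[n] (extendE N w) k) ^ 2 := by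
      funext w; rw [phiL_apply]; ring
    rw [heq] at this
    refine this.congr_fderiv ?_
    ext w
    simp only [ContinuousLinearMap.coe_smul', Pi.smul_apply, ContinuousLinearMap.add_apply,
      smul_eq_mul, phiL_apply]
    ring
  have h2 : HasFDerivAt (fun w => Ffun f k (extendE N w k))
      (f k (extendE N v k) • phiL 0 N k) v := by
    have hint : HasDerivAt (fun s => Ffun f k s) (f k (extendE N v k)) (extendE N v k) := by
      have := ((hf k).integral_hasStrictDerivAt 0 (extendE N v k)).hasDerivAt
      exact this
    have hp0 : HasFDerivAt (fun w => phiL 0 N k w) (phiL 0 N k) v := (phiL 0 N k).hasFDerivAt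
    have hc : phiL 0 N k v = extendE N v k := by simp
    rw [← hc] at hint
    exact hint.comp_hasFDerivAt v hp0
  exact h1.sub h2

theorem stmt4 (n N : ℕ) (hn : 1 ≤ n) (hN : 2 ≤ N) (p : ℤ → ℝ)
    (f : ℤ → ℝ → ℝ) (hf : ∀ k, Continuous (f k)) (v : Fin N → ℝ) :
    fderiv ℝ (Jfun n N p (Ffun f)) v = 0 ↔ Solves n N p f v := by
  have hJ : HasFDerivAt (Jfun n N p (Ffun f))
      (∑ k ∈ Icc (1 - (n:ℤ)) (N:ℤ),
        ((p k * dd^[n] (extendE N v) k) • phiL n N k - f k (extendE N v k) • phiL 0 N k)) v := by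
    have := HasFDerivAt.fun_sum
      (fun k (_ : k ∈ Icc (1-(n:ℤ)) (N:ℤ)) => hasFDeriv_term n N p f hf v k)
    exact this
  rw [hJ.fderiv]
  set D := ∑ k ∈ Icc (1 - (n:ℤ)) (N:ℤ),
      ((p k * dd^[n] (extendE N v) k) • phiL n N k - f k (extendE N v k) • phiL 0 N k) with hD
  have key : ∀ i : Fin N, D (Pi.single i 1)
      = (-1:ℝ)^n * dd^[n] (fun j => p j * dd^[n] (extendE N v) j) ((i:ℤ)+1-n)
        - f ((i:ℤ)+1) (extendE N v ((i:ℤ)+1)) := by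
    intro i
    rw [hD, ContinuousLinearMap.sum_apply]
    have hterm : ∀ k ∈ Icc (1-(n:ℤ)) (N:ℤ),
        ((p k * dd^[n] (extendE N v) k) • phiL n N k
          - f k (extendE N v k) • phiL 0 N k) (Pi.single i 1)
        = (p k * dd^[n] (extendE N v) k) * dd^[n] (extendE N (Pi.single i 1)) k
          - f k (extendE N v k) * (if k = (i:ℤ)+1 then 1 else 0) := by
      intro k _
      simp only [ContinuousLinearMap.sub_apply, ContinuousLinearMap.coe_smul', Pi.smul_apply,
        smul_eq_mul, phiL_apply, Function.iterate_zero, id_eq, extendE_single]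
    rw [Finset.sum_congr rfl hterm, Finset.sum_sub_distrib]
    congr 1
    · have hsbp := sbp n (fun j => p j * dd^[n] (extendE N v) j) (extendE N (Pi.single i 1))
        1 (N:ℤ) (by omega)
        (fun k hk => extendE_support N _ k hk)
      rw [hsbp]
      congr 1
      rw [Finset.sum_congr rfl (fun k (_ : k ∈ Icc (1:ℤ) (N:ℤ)) => by
        rw [extendE_single, mul_ite, mul_one, mul_zero])]
      rw [Finset.sum_ite_eq' (Icc (1:ℤ) (N:ℤ)) ((i:ℤ)+1)
        (fun k => dd^[n] (fun j => p j * dd^[n] (extendE N v) j) (k - n))]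
      rw [if_pos]
      have := i.isLt
      simp only [Finset.mem_Icc]
      omega
    · rw [Finset.sum_congr rfl (fun k (_ : k ∈ Icc (1-(n:ℤ)) (N:ℤ)) => by
        rw [mul_ite, mul_one, mul_zero])]
      rw [Finset.sum_ite_eq' (Icc (1-(n:ℤ)) (N:ℤ)) ((i:ℤ)+1)
        (fun k => f k (extendE N v k))]
      rw [if_pos]
      have := i.isLt
      simp only [Finset.mem_Icc]
      omega
  have hDzero : D = 0 ↔ ∀ i : Fin N, D (Pi.single i 1) = 0 := by
    constructor
    · intro h i; rw [h]; rfl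
    · intro h
      ext w
      have hw : w = ∑ i, Pi.single i (w i) := (Finset.univ_sum_single w).symm
      conv_lhs => rw [hw]
      rw [map_sum]
      simp only [ContinuousLinearMap.zero_apply]
      refine Finset.sum_eq_zero fun i _ => ?_
      have hsingle : Pi.single i (w i) = w i • (Pi.single i 1 : Fin N → ℝ) := by
        funext j
        simp only [Pi.smul_apply, Pi.single_apply, smul_eq_mul]
        split <;> simp
      rw [hsingle, map_smul, h i, smul_zero]
  rw [hDzero]
  have hsq : ((-1:ℝ)^n) * ((-1:ℝ)^n) = 1 := by
    rw [← pow_add]; exact Even.neg_one_pow ⟨n, by ring⟩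
  constructor
  · intro h k hk
    simp only [Finset.mem_Icc] at hk
    have hlt : (k-1).toNat < N := by omega
    have hi := h ⟨(k-1).toNat, hlt⟩
    rw [key] at hi
    have hcoe : ((⟨(k-1).toNat, hlt⟩ : Fin N) : ℤ) + 1 = k := by simp; omega
    rw [hcoe] at hi
    rw [pow_succ]
    linear_combination ((-1:ℝ)^n) * hi
      + (- dd^[n] (fun j => p j * dd^[n] (extendE N v) j) (k - n)) * hsq
  · intro h i
    rw [key]
    have hk : (i:ℤ)+1 ∈ Icc (1:ℤ) (N:ℤ) := by
      have := i.isLt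
      simp only [Finset.mem_Icc]
      omega
    have hi := h ((i:ℤ)+1) hk
    rw [pow_succ] at hi
    linear_combination ((-1:ℝ)^n) * hi
      + (f ((i:ℤ)+1) (extendE N v ((i:ℤ)+1))) * hsq
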